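/- The mapping cone of a morphism of d-fold factorizations is again a d-fold factorization when d is even: given a morphism φ : (M_i,f_i) → (N_i,g_i) of d-fold (𝒞,S)-factorizations of η, the sequence C_φ with objects M_{i+1} ⊕ N_i and maps given by the matrices [[−f_{i+1}, 0],[φ_{i+1}, g_i]] is a d-fold (𝒞,S)-factorization of η; i.e., every d-fold cyclic composition of these matrix maps equals η at the corresponding direct sum. -/

import Mathlib

open CategoryTheory CategoryTheory.Limits

universe v u

variable {C : Type u} [Category.{v} C] [Preadditive C]

/-- The composite of `k` consecutive maps of an `ℤ`-indexed sequence, starting at `n`. -/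
def pcomp (X : ℤ → C) (f : ∀ n : ℤ, X n ⟶ X (n + 1)) :
    (k : ℕ) → (n : ℤ) → (X n ⟶ X (n + k))
  | 0, n => eqToHom (congrArg X (by simp))
  | k + 1, n => f n ≫ pcomp X f k (n + 1) ≫ eqToHom (congrArg X (by push_cast; ring))

/-- A `d`-fold `(𝒞,S)`-factorization of `η`, presented as an `S`-periodic `ℤ`-indexed
sequence of morphisms in which each composite of `d` consecutive maps is the corresponding
component of `η`. -/
structure Factorization (S : C ⥤ C) (η : 𝟭 C ⟶ S) (d : ℕ) where
  X : ℤ → C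
  f : ∀ n : ℤ, X n ⟶ X (n + 1)
  per : ∀ n : ℤ, S.obj (X n) ≅ X (n + d)
  f_per : ∀ n : ℤ, S.map (f n) =
    (per n).hom ≫ f (n + d) ≫ eqToHom (congrArg X (by ring)) ≫ (per (n + 1)).inv
  comp_eq : ∀ n : ℤ, pcomp X f d n = η.app (X n) ≫ (per n).hom

/-- A morphism of `d`-fold factorizations. -/
structure IsFactMor {S : C ⥤ C} {η : 𝟭 C ⟶ S} {d : ℕ}
    (A B : Factorization S η d) (φ : ∀ n : ℤ, A.X n ⟶ B.X n) : Prop where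
  comm : ∀ n : ℤ, A.f n ≫ φ (n + 1) = φ n ≫ B.f n
  per : ∀ n : ℤ, S.map (φ n) = (A.per n).hom ≫ φ (n + d) ≫ (B.per n).inv

/-- A homotopy between two morphisms of `d`-fold factorizations. -/
structure IsHomotopy {S : C ⥤ C} {η : 𝟭 C ⟶ S} {d : ℕ}
    (A B : Factorization S η d) (φ φ' : ∀ n : ℤ, A.X n ⟶ B.X n)
    (s : ∀ n : ℤ, A.X (n + 1) ⟶ B.X n) : Prop where
  per : ∀ n : ℤ, S.map (s n) =
    (A.per (n + 1)).hom ≫ eqToHom (congrArg A.X (by ring)) ≫ s (n + d) ≫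
      (B.per n).inv
  htpy : ∀ n : ℤ, φ n - φ' n =
    A.f n ≫ s n +
      eqToHom (congrArg A.X (by ring)) ≫ s (n - 1) ≫ B.f (n - 1) ≫
        eqToHom (congrArg B.X (by ring))

/-- The homotopy relation on morphisms of `d`-fold factorizations. -/
def Homotopic {S : C ⥤ C} {η : 𝟭 C ⟶ S} {d : ℕ}
    (A B : Factorization S η d) (φ φ' : ∀ n : ℤ, A.X n ⟶ B.X n) : Prop :=
  ∃ s : ∀ n : ℤ, A.X (n + 1) ⟶ B.X n, IsHomotopy A B φ φ' s


instance {D : Type*} [Category D] [Preadditive D] (F : D ⥤ D) [F.Additive] :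
    PreservesBinaryBiproducts F :=
  preservesBinaryBiproducts_of_preservesBiproducts F

section ConeAux

variable [HasBinaryBiproducts C] {S : C ⥤ C} {η : 𝟭 C ⟶ S} {d : ℕ}
  (A B : Factorization S η d) (φ : ∀ n : ℤ, A.X n ⟶ B.X n)

private lemma inr_eqh {n m : ℤ} (h : n = m)
    {h2 : (A.X (n + 1) ⊞ B.X n : C) = (A.X (m + 1) ⊞ B.X m : C)} :
    (biprod.inr : B.X n ⟶ _) ≫ eqToHom h2 =
      eqToHom (congrArg B.X h) ≫ biprod.inr := by
  subst h; rw [Subsingleton.elim h2 rfl]; simp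

private lemma inl_eqh {n m : ℤ} (h : n = m)
    {h2 : (A.X (n + 1) ⊞ B.X n : C) = (A.X (m + 1) ⊞ B.X m : C)} :
    (biprod.inl : A.X (n + 1) ⟶ _) ≫ eqToHom h2 =
      eqToHom (congrArg (fun t => A.X (t + 1)) h) ≫ biprod.inl := by
  subst h; rw [Subsingleton.elim h2 rfl]; simp

private lemma eqh_fst {n m : ℤ} (h : n = m)
    {h2 : (A.X (n + 1) ⊞ B.X n : C) = (A.X (m + 1) ⊞ B.X m : C)} :
    eqToHom h2 ≫ (biprod.fst : (A.X (m + 1) ⊞ B.X m : C) ⟶ _) =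
      biprod.fst ≫ eqToHom (congrArg (fun t => A.X (t + 1)) h) := by
  subst h; rw [Subsingleton.elim h2 rfl]; simp

private lemma eqh_snd {n m : ℤ} (h : n = m)
    {h2 : (A.X (n + 1) ⊞ B.X n : C) = (A.X (m + 1) ⊞ B.X m : C)} :
    eqToHom h2 ≫ (biprod.snd : (A.X (m + 1) ⊞ B.X m : C) ⟶ _) =
      biprod.snd ≫ eqToHom (congrArg B.X h) := by
  subst h; rw [Subsingleton.elim h2 rfl]; simp

private lemma cone_inr_pcomp (k : ℕ) : ∀ n : ℤ,
    biprod.inr ≫ pcomp (fun m => A.X (m + 1) ⊞ B.X m)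
      (fun m => biprod.desc (biprod.lift (-A.f (m + 1)) (φ (m + 1)))
        (biprod.lift 0 (B.f m))) k n =
    pcomp B.X B.f k n ≫ biprod.inr := by
  induction k with
  | zero =>
      intro n
      simp only [pcomp]
      rw [inr_eqh A B (show n = n + ((0 : ℕ) : ℤ) by simp)]
  | succ k ih =>
      intro n
      have hlift : (biprod.lift (0 : B.X n ⟶ A.X (n + 1 + 1)) (B.f n)) =
          B.f n ≫ biprod.inr := by ext <;> simp
      simp only [pcomp, biprod.inr_desc_assoc, hlift, Category.assoc]
      rw [reassoc_of% (ih (n + 1)),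
        inr_eqh A B (show n + 1 + (k : ℤ) = n + ((k + 1 : ℕ) : ℤ) by push_cast; ring)]

private lemma cone_inl_pcomp_fst (k : ℕ) : ∀ n : ℤ,
    biprod.inl ≫ pcomp (fun m => A.X (m + 1) ⊞ B.X m)
      (fun m => biprod.desc (biprod.lift (-A.f (m + 1)) (φ (m + 1)))
        (biprod.lift 0 (B.f m))) k n ≫ biprod.fst =
    ((-1 : ℤ) ^ k) • (pcomp A.X A.f k (n + 1) ≫
      eqToHom (congrArg A.X (show n + 1 + (k : ℤ) = n + (k : ℤ) + 1 by ring))) := by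
  induction k with
  | zero =>
      intro n
      simp only [pcomp]
      rw [eqh_fst A B (show n = n + ((0 : ℕ) : ℤ) by simp)]
      simp
  | succ k ih =>
      intro n
      have hlift : (biprod.lift (-A.f (n + 1)) (φ (n + 1))) =
          (-A.f (n + 1)) ≫ biprod.inl + φ (n + 1) ≫ biprod.inr := by ext <;> simp
      simp only [pcomp, biprod.inl_desc_assoc, hlift, Category.assoc,
        Preadditive.add_comp, Preadditive.neg_comp]
      rw [eqh_fst A B (show n + 1 + (k : ℤ) = n + ((k + 1 : ℕ) : ℤ) by push_cast; ring)]
      rw [reassoc_of% (cone_inr_pcomp A B φ k (n + 1))]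
      have := reassoc_of% (ih (n + 1))
      rw [this]
      simp [pow_succ, eqToHom_trans, mul_comm]

private lemma cone_inl_pcomp_snd (hc : ∀ n : ℤ, A.f n ≫ φ (n + 1) = φ n ≫ B.f n)
    (k : ℕ) : ∀ n : ℤ,
    biprod.inl ≫ pcomp (fun m => A.X (m + 1) ⊞ B.X m)
      (fun m => biprod.desc (biprod.lift (-A.f (m + 1)) (φ (m + 1)))
        (biprod.lift 0 (B.f m))) (k + 1) n ≫ biprod.snd =
    ((Finset.range (k + 1)).sum (fun j => (-1 : ℤ) ^ j)) •
      (φ (n + 1) ≫ pcomp B.X B.f k (n + 1) ≫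
        eqToHom (congrArg B.X (show n + 1 + (k : ℤ) = n + ((k : ℤ) + 1) by ring))) := by
  induction k with
  | zero =>
      intro n
      have hlift : (biprod.lift (-A.f (n + 1)) (φ (n + 1))) =
          (-A.f (n + 1)) ≫ biprod.inl + φ (n + 1) ≫ biprod.inr := by ext <;> simp
      simp only [pcomp, biprod.inl_desc_assoc, hlift, Category.assoc,
        Preadditive.add_comp, Preadditive.neg_comp]
      rw [eqh_snd A B (show n + 1 + ((0 : ℕ) : ℤ) = n + ((0 + 1 : ℕ) : ℤ) by push_cast; ring)]
      rw [reassoc_of% (inl_eqh A B (show n + 1 = n + 1 + ((0 : ℕ) : ℤ) by simp)),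
        reassoc_of% (inr_eqh A B (show n + 1 = n + 1 + ((0 : ℕ) : ℤ) by simp))]
      simp [eqToHom_trans]
  | succ k ih =>
      intro n
      have hlift : (biprod.lift (-A.f (n + 1)) (φ (n + 1))) =
          (-A.f (n + 1)) ≫ biprod.inl + φ (n + 1) ≫ biprod.inr := by ext <;> simp
      have hstep0 : pcomp (fun m => A.X (m + 1) ⊞ B.X m)
          (fun m => biprod.desc (biprod.lift (-A.f (m + 1)) (φ (m + 1)))
            (biprod.lift 0 (B.f m))) (k + 1 + 1) n =
          biprod.desc (biprod.lift (-A.f (n + 1)) (φ (n + 1))) (biprod.lift 0 (B.f n)) ≫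
            pcomp (fun m => A.X (m + 1) ⊞ B.X m)
              (fun m => biprod.desc (biprod.lift (-A.f (m + 1)) (φ (m + 1)))
                (biprod.lift 0 (B.f m))) (k + 1) (n + 1) ≫
            eqToHom (congrArg (fun m => A.X (m + 1) ⊞ B.X m) (by push_cast; ring)) := rfl
      rw [hstep0]
      simp only [biprod.inl_desc_assoc, hlift, Category.assoc,
        Preadditive.add_comp, Preadditive.neg_comp]
      rw [eqh_snd A B
        (show n + 1 + ((k + 1 : ℕ) : ℤ) = n + ((k + 1 + 1 : ℕ) : ℤ) by push_cast; ring)]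
      rw [reassoc_of% (cone_inr_pcomp A B φ (k + 1) (n + 1))]
      have := reassoc_of% (ih (n + 1))
      rw [this]
      have hsum : ((Finset.range (k + 1 + 1)).sum (fun j => (-1 : ℤ) ^ j)) =
          1 - (Finset.range (k + 1)).sum (fun j => (-1 : ℤ) ^ j) := by
        rw [neg_one_geom_sum, neg_one_geom_sum]
        by_cases h : Even k <;> simp [Nat.even_add_one, h]
      have hstep : pcomp B.X B.f (k + 1) (n + 1) =
          B.f (n + 1) ≫ pcomp B.X B.f k (n + 1 + 1) ≫
            eqToHom (congrArg B.X (by push_cast; ring)) := rfl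
      rw [hsum, hstep]
      have hcomm := reassoc_of% (hc (n + 1))
      simp only [sub_smul, one_smul, Preadditive.comp_zsmul, Preadditive.zsmul_comp,
        Preadditive.neg_comp, Preadditive.comp_neg, Category.assoc, eqToHom_trans]
      rw [hcomm]
      simp only [Category.assoc, biprod.inr_snd_assoc, eqToHom_trans]
      abel

end ConeAux

/-- The mapping cone of a morphism of `d`-fold factorizations is again a `d`-fold
factorization when `d` is even: each composite of `d` consecutive cone maps
`[[−f_{i+1}, 0], [φ_{i+1}, g_i]]` equals the component of `η` at the corresponding
direct sum `M_{i+1} ⊕ N_i`. -/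
theorem cone_is_factorization [HasBinaryBiproducts C]
    (S : C ⥤ C) [S.Additive] [S.IsEquivalence]
    (η : 𝟭 C ⟶ S) (hη : ∀ M : C, η.app (S.obj M) = S.map (η.app M))
    (d : ℕ) (hd : Even d) (hd2 : 2 ≤ d) (A B : Factorization S η d)
    (φ : ∀ n : ℤ, A.X n ⟶ B.X n) (hφ : IsFactMor A B φ) :
    ∀ n : ℤ,
      pcomp (fun m => A.X (m + 1) ⊞ B.X m)
        (fun m => biprod.desc (biprod.lift (-A.f (m + 1)) (φ (m + 1)))
          (biprod.lift 0 (B.f m))) d n =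
      η.app (A.X (n + 1) ⊞ B.X n) ≫ (S.mapBiprod (A.X (n + 1)) (B.X n)).hom ≫
        biprod.map ((A.per (n + 1)).hom ≫ eqToHom (congrArg A.X (by ring)))
          ((B.per n).hom) := by
  intro n
  obtain ⟨k, rfl⟩ : ∃ k, d = k + 1 := ⟨d - 1, by omega⟩
  have hinl : biprod.inl ≫ η.app (A.X (n + 1) ⊞ B.X n) =
      η.app (A.X (n + 1)) ≫ S.map biprod.inl := by
    simpa using η.naturality (biprod.inl : A.X (n + 1) ⟶ A.X (n + 1) ⊞ B.X n)
  have hinr : biprod.inr ≫ η.app (A.X (n + 1) ⊞ B.X n) =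
      η.app (B.X n) ≫ S.map biprod.inr := by
    simpa using η.naturality (biprod.inr : B.X n ⟶ A.X (n + 1) ⊞ B.X n)
  apply biprod.hom_ext'
  · apply biprod.hom_ext
    · simp only [Category.assoc]
      rw [cone_inl_pcomp_fst A B φ (k + 1) n, Even.neg_one_pow (by exact_mod_cast hd),
        one_smul, A.comp_eq (n + 1)]
      rw [reassoc_of% hinl]
      rw [Functor.mapBiprod_hom]
      simp [Functor.mapBiprod_hom, ← Functor.map_comp_assoc]
    · simp only [Category.assoc]
      rw [cone_inl_pcomp_snd A B φ hφ.comm k n, neg_one_geom_sum, if_pos hd, zero_smul]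
      rw [reassoc_of% hinl]
      rw [Functor.mapBiprod_hom]
      simp [Functor.mapBiprod_hom, ← Functor.map_comp_assoc]
  · rw [cone_inr_pcomp A B φ (k + 1) n, B.comp_eq n]
    rw [reassoc_of% hinr]
    simp only [Functor.mapBiprod_hom, Category.assoc]
    apply biprod.hom_ext <;>
      simp [← Functor.map_comp_assoc, ← Functor.map_comp]
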